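/- Let r₁, r₂ ∈ ℬ_{ℓ₁} and s₁, s₂ ∈ ℬ_{ℓ₂} be pairs with φ̄(r₁,s₁) = φ̄(r₂,s₂). Then for every block ℬ_λ and all overlap types κ₁, κ₂, the sets {t ∈ ℬ_λ : φ̄(r₁,t) = κ₁ and φ̄(s₁,t) = κ₂} and {t ∈ ℬ_λ : φ̄(r₂,t) = κ₁ and φ̄(s₂,t) = κ₂} have the same cardinality. -/

import Mathlib

open Matrix Finset

abbrev PairIdx (d : ℕ) := {p : Fin d × Fin d // p.1 < p.2}

/-- Pairs `r` and `s` lie in the same block: the unordered pairs of cluster labels coincide. -/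
def sameBlock {d K : ℕ} (g : Fin d → Fin K) (r s : PairIdx d) : Prop :=
  (g r.1.1 = g s.1.1 ∧ g r.1.2 = g s.1.2) ∨ (g r.1.1 = g s.1.2 ∧ g r.1.2 = g s.1.1)

instance {d K : ℕ} (g : Fin d → Fin K) : DecidableRel (sameBlock g) :=
  fun r s => by unfold sameBlock; infer_instance

/-- The overlap type `φ̄(r,s)`: the multiset of cluster labels of the elements of
`{i_r, j_r} ∩ {i_s, j_s}`.  The empty multiset encodes the type `(0,0)`, the singleton
`{k}` encodes `(0,k)`, and the two-element multiset `{k₁,k₂}` encodes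
`(min(k₁,k₂), max(k₁,k₂))`. -/
def overlap {d K : ℕ} (g : Fin d → Fin K) (r s : PairIdx d) : Multiset (Fin K) :=
  (({r.1.1, r.1.2} ∩ {s.1.1, s.1.2} : Finset (Fin d)).val.map g)

/-- The cardinality of the block containing `r`. -/
def blockCard {d K : ℕ} (g : Fin d → Fin K) (r : PairIdx d) : ℕ :=
  (Finset.univ.filter (fun t => sameBlock g r t)).card

/-- The blockwise-averaging matrix `Γ`. -/
noncomputable def Gamma {d K : ℕ} (g : Fin d → Fin K) :
    Matrix (PairIdx d) (PairIdx d) ℝ :=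
  Matrix.of fun r s => if sameBlock g r s then (1 : ℝ) / (blockCard g r) else 0

/-- Membership in the class `𝒮_𝒢`. -/
def inSG {d K : ℕ} (g : Fin d → Fin K) (S : Matrix (PairIdx d) (PairIdx d) ℝ) : Prop :=
  S.IsSymm ∧ ∀ r r' s s' : PairIdx d, sameBlock g r r' → sameBlock g s s' →
    overlap g r s = overlap g r' s' → S r s = S r' s'

def pset {d : ℕ} (r : PairIdx d) : Finset (Fin d) := {r.1.1, r.1.2}

lemma overlap_eq {d K : ℕ} (g : Fin d → Fin K) (r s : PairIdx d) :
    overlap g r s = (pset r ∩ pset s).val.map g := rfl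

lemma multiset_pair_eq {α : Type*} {a b c e : α} :
    ({a, b} : Multiset α) = {c, e} ↔ (a = c ∧ b = e) ∨ (a = e ∧ b = c) := by
  constructor
  · intro h
    have h' : a ::ₘ ({b} : Multiset α) = c ::ₘ {e} := h
    rw [Multiset.cons_eq_cons] at h'
    rcases h' with ⟨h1, h2⟩ | ⟨h1, cs, h2, h3⟩
    · exact Or.inl ⟨h1, Multiset.singleton_inj.mp h2⟩
    · have hcs : cs = 0 := by
        have := congrArg Multiset.card h2
        simpa using this
      subst hcs
      simp only [Multiset.cons_zero, Multiset.singleton_inj] at h2 h3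
      exact Or.inr ⟨h3.symm, h2⟩
  · rintro (⟨rfl, rfl⟩ | ⟨rfl, rfl⟩)
    · rfl
    · exact Multiset.pair_comm a b  -- check direction

lemma pair_finset_eq {α : Type*} [DecidableEq α] {a b c e : α} (hab : a ≠ b)
    (h : ({a, b} : Finset α) = {c, e}) : (a = c ∧ b = e) ∨ (a = e ∧ b = c) := by
  have ha : a ∈ ({c, e} : Finset α) := h ▸ (by simp)
  have hb : b ∈ ({c, e} : Finset α) := h ▸ (by simp)
  have hc : c ∈ ({a, b} : Finset α) := h.symm ▸ (by simp)
  have he : e ∈ ({a, b} : Finset α) := h.symm ▸ (by simp)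
  simp only [Finset.mem_insert, Finset.mem_singleton] at ha hb
  rcases ha with ha | ha
  · rcases hb with hb | hb
    · exact absurd (ha.trans hb.symm) hab
    · exact Or.inl ⟨ha, hb⟩
  · rcases hb with hb | hb
    · exact Or.inr ⟨ha, hb⟩
    · exact absurd (ha.trans hb.symm) hab

lemma pset_val {d : ℕ} (r : PairIdx d) : (pset r).val = {r.1.1, r.1.2} := by
  have : r.1.1 ∉ ({r.1.2} : Finset (Fin d)) := by simp [Fin.ne_of_lt r.2]
  simp [pset, Finset.insert_val_of_notMem this]

lemma pset_inj {d : ℕ} {r s : PairIdx d} (h : pset r = pset s) : r = s := by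
  have h2 := pair_finset_eq (ne_of_lt r.2) h
  rcases h2 with ⟨h1, h2⟩ | ⟨h1, h2⟩
  · exact Subtype.ext (Prod.ext h1 h2)
  · exfalso
    have := r.2
    rw [h1, h2] at this
    exact absurd s.2 (not_lt_of_gt this)

lemma sameBlock_iff_ms {d K : ℕ} (g : Fin d → Fin K) (r s : PairIdx d) :
    sameBlock g r s ↔ (pset r).val.map g = (pset s).val.map g := by
  rw [pset_val, pset_val]
  have : ∀ t : PairIdx d, (({t.1.1, t.1.2} : Multiset (Fin d)).map g) = {g t.1.1, g t.1.2} := by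
    intro t; rfl
  rw [this, this, multiset_pair_eq]
  rfl

lemma exists_perm_of_map_eq {d K : ℕ} (g : Fin d → Fin K) :
    ∀ (A B : Finset (Fin d)), A.val.map g = B.val.map g →
    ∃ π : Equiv.Perm (Fin d), (∀ x, g (π x) = g x) ∧ A.image π = B := by
  intro A
  induction A using Finset.induction_on with
  | empty =>
    intro B h
    have : B.val.map g = 0 := h.symm
    have hB : B = ∅ := by
      rw [Multiset.map_eq_zero] at this
      exact Finset.val_eq_zero.mp this
    exact ⟨1, fun x => rfl, by simp [hB]⟩
  | @insert a A ha IH =>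
    intro B h
    rw [Finset.insert_val_of_notMem ha, Multiset.map_cons] at h
    have hga : g a ∈ B.val.map g := by rw [← h]; exact Multiset.mem_cons_self _ _
    obtain ⟨b, hbB, hgb⟩ := Multiset.mem_map.mp hga
    have hbB' : b ∈ B := hbB
    have hBval : B.val = b ::ₘ (B.erase b).val := by
      rw [Finset.erase_val]
      exact (Multiset.cons_erase hbB).symm
    rw [hBval, Multiset.map_cons, hgb] at h
    have h' : A.val.map g = (B.erase b).val.map g := by
      exact (Multiset.cons_inj_right _).mp h
    obtain ⟨π', hπ'g, hπ'im⟩ := IH _ h'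
    set c := π' a with hc
    have hgc : g c = g b := by rw [hπ'g a, ← hgb]
    refine ⟨π'.trans (Equiv.swap c b), ?_, ?_⟩
    · intro x
      simp only [Equiv.trans_apply]
      rcases eq_or_ne (π' x) c with h1 | h1
      · rw [h1, Equiv.swap_apply_left, ← hgc, ← h1, hπ'g]
      · rcases eq_or_ne (π' x) b with h2 | h2
        · rw [h2, Equiv.swap_apply_right, hgc, ← h2, hπ'g]
        · rw [Equiv.swap_apply_of_ne_of_ne h1 h2, hπ'g]
    · rw [Finset.image_insert]
      have h1 : Equiv.swap c b (π' a) = b := by rw [← hc, Equiv.swap_apply_left]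
      have h2 : A.image (π'.trans (Equiv.swap c b)) = B.erase b := by
        rw [← hπ'im]
        apply Finset.image_congr
        intro x hx
        simp only [Equiv.trans_apply]
        have hx1 : π' x ≠ c := fun hh => ha (by
          have := π'.injective hh
          rwa [this] at hx)
        have hx2 : π' x ≠ b := by
          intro hh
          have : π' x ∈ B.erase b := hπ'im ▸ Finset.mem_image_of_mem _ hx
          rw [hh] at this
          exact absurd this (Finset.notMem_erase _ _)
        exact Equiv.swap_apply_of_ne_of_ne hx1 hx2
      simp only [Equiv.trans_apply, h1, h2]
      exact Finset.insert_erase hbB'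

lemma exists_perm_extend {d K : ℕ} (g : Fin d → Fin K) (A : Finset (Fin d)) (f : Fin d → Fin d)
    (hinj : Set.InjOn f ↑A) (hpres : ∀ x ∈ A, g (f x) = g x) :
    ∃ π : Equiv.Perm (Fin d), (∀ x, g (π x) = g x) ∧ ∀ x ∈ A, π x = f x := by
  classical
  set B := A.image f with hB
  have hmapeq : A.val.map g = B.val.map g := by
    rw [hB, Finset.image_val_of_injOn hinj, Multiset.map_map]
    exact (Multiset.map_congr rfl (fun x hx => (hpres x hx).symm))
  have hcompl : Aᶜ.val.map g = Bᶜ.val.map g := by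
    have hA : A.val + Aᶜ.val = (Finset.univ : Finset (Fin d)).val := by
      have h0 : (A.disjUnion Aᶜ disjoint_compl_right).val = A.val + Aᶜ.val := rfl
      rw [← h0, Finset.disjUnion_eq_union, Finset.union_compl]
    have hBv : B.val + Bᶜ.val = (Finset.univ : Finset (Fin d)).val := by
      have h0 : (B.disjUnion Bᶜ disjoint_compl_right).val = B.val + Bᶜ.val := rfl
      rw [← h0, Finset.disjUnion_eq_union, Finset.union_compl]
    have h1 : A.val.map g + Aᶜ.val.map g = B.val.map g + Bᶜ.val.map g := by
      rw [← Multiset.map_add, ← Multiset.map_add, hA, hBv]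
    rw [hmapeq] at h1
    exact add_left_cancel h1
  obtain ⟨π₀, hπ₀g, hπ₀im⟩ := exists_perm_of_map_eq g Aᶜ Bᶜ hcompl
  set F : Fin d → Fin d := fun x => if x ∈ A then f x else π₀ x with hF
  have hFinj : Function.Injective F := by
    intro x y hxy
    simp only [hF] at hxy
    by_cases hx : x ∈ A <;> by_cases hy : y ∈ A <;> simp [hx, hy] at hxy
    · exact hinj hx hy hxy
    · exfalso
      have h1 : f x ∈ B := Finset.mem_image_of_mem _ hx
      have h2 : π₀ y ∈ Bᶜ := hπ₀im ▸ Finset.mem_image_of_mem _ (Finset.mem_compl.mpr hy)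
      rw [hxy] at h1
      exact (Finset.mem_compl.mp h2) h1
    · exfalso
      have h1 : f y ∈ B := Finset.mem_image_of_mem _ hy
      have h2 : π₀ x ∈ Bᶜ := hπ₀im ▸ Finset.mem_image_of_mem _ (Finset.mem_compl.mpr hx)
      rw [← hxy] at h1
      exact (Finset.mem_compl.mp h2) h1
    · exact hxy
  have hFbij : Function.Bijective F := Finite.injective_iff_bijective.mp hFinj
  refine ⟨Equiv.ofBijective F hFbij, ?_, ?_⟩
  · intro x
    simp only [Equiv.ofBijective_apply, hF]
    by_cases hx : x ∈ A
    · simp [hx, hpres x hx]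
    · simp [hx, hπ₀g x]
  · intro x hx
    simp [Equiv.ofBijective_apply, hF, hx]

def pmap {d : ℕ} (σ : Equiv.Perm (Fin d)) (t : PairIdx d) : PairIdx d :=
  if h : σ t.1.1 < σ t.1.2 then ⟨(σ t.1.1, σ t.1.2), h⟩
  else ⟨(σ t.1.2, σ t.1.1), by
    rcases lt_or_eq_of_le (le_of_not_gt h) with h' | h'
    · exact h'
    · exact absurd (σ.injective h') (ne_of_gt t.2)⟩

lemma pset_pmap {d : ℕ} (σ : Equiv.Perm (Fin d)) (t : PairIdx d) :
    pset (pmap σ t) = (pset t).image σ := by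
  unfold pmap
  split <;> simp [pset, Finset.image_insert, Finset.pair_comm]

lemma pmap_pmap_inv {d : ℕ} (σ : Equiv.Perm (Fin d)) (t : PairIdx d) :
    pmap σ⁻¹ (pmap σ t) = t := by
  apply pset_inj
  rw [pset_pmap, pset_pmap, Finset.image_image]
  have : (σ⁻¹ : Equiv.Perm (Fin d)) ∘ σ = id := by
    funext x; simp
  rw [this, Finset.image_id]

lemma map_pset_pmap {d K : ℕ} (g : Fin d → Fin K) (σ : Equiv.Perm (Fin d))
    (hσ : ∀ x, g (σ x) = g x) (X : Finset (Fin d)) :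
    (X.image σ).val.map g = X.val.map g := by
  rw [Finset.image_val_of_injOn (σ.injective.injOn), Multiset.map_map]
  exact Multiset.map_congr rfl (fun x _ => hσ x)

lemma sameBlock_pmap {d K : ℕ} (g : Fin d → Fin K) (σ : Equiv.Perm (Fin d))
    (hσ : ∀ x, g (σ x) = g x) (t₀ t : PairIdx d) :
    sameBlock g t₀ (pmap σ t) ↔ sameBlock g t₀ t := by
  rw [sameBlock_iff_ms, sameBlock_iff_ms, pset_pmap, map_pset_pmap g σ hσ]

lemma overlap_pmap {d K : ℕ} (g : Fin d → Fin K) (σ : Equiv.Perm (Fin d))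
    (hσ : ∀ x, g (σ x) = g x) (r r' t : PairIdx d)
    (him : (pset r).image σ = pset r') :
    overlap g r' (pmap σ t) = overlap g r t := by
  show ((pset r' ∩ pset (pmap σ t)).val.map g) = ((pset r ∩ pset t).val.map g)
  rw [pset_pmap, ← him, ← Finset.image_inter _ _ σ.injective, map_pset_pmap g σ hσ]

lemma pset_ne {d : ℕ} (r : PairIdx d) : r.1.1 ≠ r.1.2 := ne_of_lt r.2

lemma pset_card {d : ℕ} (r : PairIdx d) : (pset r).card = 2 := by
  rw [pset, Finset.card_insert_of_notMem (by simp [pset_ne r]), Finset.card_singleton]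

noncomputable def al1 {d K : ℕ} (g : Fin d → Fin K) (r r' : PairIdx d) : Fin d :=
  if g r.1.1 = g r'.1.1 then r'.1.1 else r'.1.2

noncomputable def al2 {d K : ℕ} (g : Fin d → Fin K) (r r' : PairIdx d) : Fin d :=
  if g r.1.1 = g r'.1.1 then r'.1.2 else r'.1.1

lemma al_spec {d K : ℕ} (g : Fin d → Fin K) {r r' : PairIdx d} (hr : sameBlock g r r') :
    g (al1 g r r') = g r.1.1 ∧ g (al2 g r r') = g r.1.2 ∧ al1 g r r' ≠ al2 g r r' ∧
    ({al1 g r r', al2 g r r'} : Finset (Fin d)) = pset r' := by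
  unfold al1 al2
  by_cases hga : g r.1.1 = g r'.1.1
  · simp only [if_pos hga]
    refine ⟨hga.symm, ?_, pset_ne r', rfl⟩
    rcases hr with ⟨h1, h2⟩ | ⟨h1, h2⟩
    · exact h2.symm
    · rw [← h1, hga]; exact h2.symm
  · simp only [if_neg hga]
    rcases hr with ⟨h1, h2⟩ | ⟨h1, h2⟩
    · exact absurd h1 hga
    · refine ⟨h1.symm, h2.symm, (pset_ne r').symm, ?_⟩
      rw [pset]; exact Finset.pair_comm _ _

def oth {d : ℕ} (r : PairIdx d) (x : Fin d) : Fin d :=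
  if r.1.1 = x then r.1.2 else r.1.1

lemma oth_spec {d : ℕ} (r : PairIdx d) (x : Fin d) (hx : x ∈ pset r) :
    pset r = {x, oth r x} ∧ x ≠ oth r x := by
  unfold oth
  rcases Finset.mem_insert.mp hx with h | h
  · subst h
    rw [if_pos rfl]
    exact ⟨rfl, pset_ne r⟩
  · rw [Finset.mem_singleton] at h
    subst h
    rw [if_neg (pset_ne r)]
    exact ⟨Finset.pair_comm _ _, (pset_ne r).symm⟩

lemma oth_mem {d : ℕ} (r : PairIdx d) (x : Fin d) : oth r x ∈ pset r := by
  unfold oth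
  split <;> simp [pset]


lemma map_pair_val {d K : ℕ} (g : Fin d → Fin K) {x u : Fin d} (h : x ≠ u) :
    (({x, u} : Finset (Fin d)).val.map g) = {g x, g u} := by
  rw [Finset.insert_val_of_notMem (by simp [h])]
  rfl

lemma exists_good_perm {d K : ℕ} (g : Fin d → Fin K) (r₁ r₂ s₁ s₂ : PairIdx d)
    (hr : sameBlock g r₁ r₂) (hs : sameBlock g s₁ s₂)
    (hφ : overlap g r₁ s₁ = overlap g r₂ s₂) :
    ∃ σ : Equiv.Perm (Fin d), (∀ x, g (σ x) = g x) ∧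
      (pset r₁).image σ = pset r₂ ∧ (pset s₁).image σ = pset s₂ := by
  classical
  rw [overlap_eq, overlap_eq] at hφ
  set I₁ := pset r₁ ∩ pset s₁ with hI₁
  set I₂ := pset r₂ ∩ pset s₂ with hI₂
  have hIcard : I₁.card = I₂.card := by
    have h := congrArg Multiset.card hφ
    rwa [Multiset.card_map, Multiset.card_map] at h
  have hIle : I₁.card ≤ 2 :=
    le_trans (Finset.card_le_card Finset.inter_subset_left) (pset_card r₁).le
  by_cases h0 : I₁.card = 0
  · -- disjoint case
    have hI₁e : I₁ = ∅ := Finset.card_eq_zero.mp h0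
    have hI₂e : I₂ = ∅ := Finset.card_eq_zero.mp (hIcard ▸ h0)
    have hdis : Disjoint (pset r₁) (pset s₁) := Finset.disjoint_iff_inter_eq_empty.mpr hI₁e
    have hdis' : Disjoint (pset r₂) (pset s₂) := Finset.disjoint_iff_inter_eq_empty.mpr hI₂e
    obtain ⟨hg1, hg2, hne12, hpr2⟩ := al_spec g hr
    obtain ⟨hg1', hg2', hne12', hps2⟩ := al_spec g hs
    have hdj : ∀ z : Fin d, z ∈ pset r₁ → z ∈ pset s₁ → False := fun z h1 h2 =>
      Finset.disjoint_left.mp hdis h1 h2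
    have hac : r₁.1.1 ≠ s₁.1.1 := fun h =>
      hdj r₁.1.1 (by simp [pset]) (by simp [pset, h])
    have hae : r₁.1.1 ≠ s₁.1.2 := fun h =>
      hdj r₁.1.1 (by simp [pset]) (by simp [pset, h])
    have hbc : r₁.1.2 ≠ s₁.1.1 := fun h =>
      hdj r₁.1.2 (by simp [pset]) (by simp [pset, h])
    have hbe : r₁.1.2 ≠ s₁.1.2 := fun h =>
      hdj r₁.1.2 (by simp [pset]) (by simp [pset, h])
    have hab : r₁.1.1 ≠ r₁.1.2 := pset_ne r₁
    have hce : s₁.1.1 ≠ s₁.1.2 := pset_ne s₁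
    have hA1 : al1 g r₁ r₂ ∈ pset r₂ := by rw [← hpr2]; simp
    have hA2 : al2 g r₁ r₂ ∈ pset r₂ := by rw [← hpr2]; simp
    have hB1 : al1 g s₁ s₂ ∈ pset s₂ := by rw [← hps2]; simp
    have hB2 : al2 g s₁ s₂ ∈ pset s₂ := by rw [← hps2]; simp
    have hAB : ∀ x ∈ pset r₂, ∀ y ∈ pset s₂, x ≠ y := fun x hx y hy h =>
      Finset.disjoint_left.mp hdis' hx (h ▸ hy)
    set f : Fin d → Fin d := fun z =>
      if z = r₁.1.1 then al1 g r₁ r₂ else if z = r₁.1.2 then al2 g r₁ r₂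
      else if z = s₁.1.1 then al1 g s₁ s₂ else al2 g s₁ s₂ with hf
    have hfa : f r₁.1.1 = al1 g r₁ r₂ := by simp [hf]
    have hfb : f r₁.1.2 = al2 g r₁ r₂ := by simp [hf, hab.symm]
    have hfc : f s₁.1.1 = al1 g s₁ s₂ := by simp [hf, hac.symm, hbc.symm]
    have hfe : f s₁.1.2 = al2 g s₁ s₂ := by simp [hf, hae.symm, hbe.symm, hce.symm]
    have hmem : ∀ z ∈ pset r₁ ∪ pset s₁,
        z = r₁.1.1 ∨ z = r₁.1.2 ∨ z = s₁.1.1 ∨ z = s₁.1.2 := by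
      intro z hz
      rcases Finset.mem_union.mp hz with h | h <;> simp [pset] at h <;> tauto
    have hinj : Set.InjOn f ↑(pset r₁ ∪ pset s₁) := by
      intro x hx y hy hxy
      rcases hmem x (Finset.mem_coe.mp hx) with h | h | h | h <;> subst h <;>
        rcases hmem y (Finset.mem_coe.mp hy) with h | h | h | h <;> subst h <;>
        simp only [hfa, hfb, hfc, hfe] at hxy <;>
        first
          | rfl
          | exact absurd hxy hne12 | exact absurd hxy.symm hne12
          | exact absurd hxy hne12' | exact absurd hxy.symm hne12'
          | exact absurd hxy (hAB _ hA1 _ hB1) | exact absurd hxy.symm (hAB _ hA1 _ hB1)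
          | exact absurd hxy (hAB _ hA1 _ hB2) | exact absurd hxy.symm (hAB _ hA1 _ hB2)
          | exact absurd hxy (hAB _ hA2 _ hB1) | exact absurd hxy.symm (hAB _ hA2 _ hB1)
          | exact absurd hxy (hAB _ hA2 _ hB2) | exact absurd hxy.symm (hAB _ hA2 _ hB2)
    have hpres : ∀ x ∈ pset r₁ ∪ pset s₁, g (f x) = g x := by
      intro x hx
      rcases hmem x hx with h | h | h | h <;> subst h
      · rw [hfa]; exact hg1
      · rw [hfb]; exact hg2
      · rw [hfc]; exact hg1'
      · rw [hfe]; exact hg2'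
    obtain ⟨π, hπg, hπf⟩ := exists_perm_extend g _ f hinj hpres
    refine ⟨π, hπg, ?_, ?_⟩
    · have h1 : (pset r₁).image π = (pset r₁).image f :=
        Finset.image_congr (fun x hx => hπf x (Finset.mem_union_left _ hx))
      rw [h1]
      show ({r₁.1.1, r₁.1.2} : Finset (Fin d)).image f = pset r₂
      rw [Finset.image_insert, Finset.image_singleton, hfa, hfb, hpr2]
    · have h1 : (pset s₁).image π = (pset s₁).image f :=
        Finset.image_congr (fun x hx => hπf x (Finset.mem_union_right _ hx))
      rw [h1]
      show ({s₁.1.1, s₁.1.2} : Finset (Fin d)).image f = pset s₂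
      rw [Finset.image_insert, Finset.image_singleton, hfc, hfe, hps2]
  · by_cases h1 : I₁.card = 1
    · -- single overlap case
      obtain ⟨x, hx⟩ := Finset.card_eq_one.mp h1
      obtain ⟨x', hx'⟩ := Finset.card_eq_one.mp (hIcard ▸ h1)
      have hgx : g x = g x' := by
        rw [hx, hx'] at hφ
        simpa using hφ
      have hxI : x ∈ I₁ := hx ▸ Finset.mem_singleton_self x
      have hx'I : x' ∈ I₂ := hx' ▸ Finset.mem_singleton_self x'
      have hxr : x ∈ pset r₁ := Finset.mem_of_mem_inter_left hxI
      have hxs : x ∈ pset s₁ := Finset.mem_of_mem_inter_right hxI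
      have hx'r : x' ∈ pset r₂ := Finset.mem_of_mem_inter_left hx'I
      have hx's : x' ∈ pset s₂ := Finset.mem_of_mem_inter_right hx'I
      obtain ⟨hru, hxu⟩ := oth_spec r₁ x hxr
      obtain ⟨hsv, hxv⟩ := oth_spec s₁ x hxs
      obtain ⟨hru', hxu'⟩ := oth_spec r₂ x' hx'r
      obtain ⟨hsv', hxv'⟩ := oth_spec s₂ x' hx's
      set u := oth r₁ x; set v := oth s₁ x; set u' := oth r₂ x'; set v' := oth s₂ x'
      have hmsr := (sameBlock_iff_ms g r₁ r₂).mp hr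
      rw [hru, hru', map_pair_val g hxu, map_pair_val g hxu'] at hmsr
      have hgu : g u = g u' := by
        rcases multiset_pair_eq.mp hmsr with ⟨e1, e2⟩ | ⟨e1, e2⟩
        · exact e2
        · rw [e2, ← hgx, e1]
      have hmss := (sameBlock_iff_ms g s₁ s₂).mp hs
      rw [hsv, hsv', map_pair_val g hxv, map_pair_val g hxv'] at hmss
      have hgv : g v = g v' := by
        rcases multiset_pair_eq.mp hmss with ⟨e1, e2⟩ | ⟨e1, e2⟩
        · exact e2
        · rw [e2, ← hgx, e1]
      have huv : u ≠ v := by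
        intro h
        have hu1 : u ∈ pset r₁ := oth_mem r₁ x
        have hu2 : u ∈ pset s₁ := h ▸ oth_mem s₁ x
        have : u ∈ I₁ := Finset.mem_inter.mpr ⟨hu1, hu2⟩
        rw [hx, Finset.mem_singleton] at this
        exact hxu this.symm
      have huv' : u' ≠ v' := by
        intro h
        have hu1 : u' ∈ pset r₂ := oth_mem r₂ x'
        have hu2 : u' ∈ pset s₂ := h ▸ oth_mem s₂ x'
        have : u' ∈ I₂ := Finset.mem_inter.mpr ⟨hu1, hu2⟩
        rw [hx', Finset.mem_singleton] at this
        exact hxu' this.symm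
      set f : Fin d → Fin d := fun z => if z = x then x' else if z = u then u' else v' with hf
      have hfx : f x = x' := by simp [hf]
      have hfu : f u = u' := by simp [hf, hxu.symm]
      have hfv : f v = v' := by simp [hf, hxv.symm, huv.symm]
      have hmem : ∀ z ∈ pset r₁ ∪ pset s₁, z = x ∨ z = u ∨ z = v := by
        intro z hz
        rcases Finset.mem_union.mp hz with h | h
        · rw [hru] at h; simp at h; tauto
        · rw [hsv] at h; simp at h; tauto
      have hinj : Set.InjOn f ↑(pset r₁ ∪ pset s₁) := by
        intro p hp q hq hpq
        rcases hmem p (Finset.mem_coe.mp hp) with h | h | h <;> subst h <;>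
          rcases hmem q (Finset.mem_coe.mp hq) with h | h | h <;> subst h <;>
          simp only [hfx, hfu, hfv] at hpq <;>
          first
            | rfl
            | exact absurd hpq hxu' | exact absurd hpq.symm hxu'
            | exact absurd hpq hxv' | exact absurd hpq.symm hxv'
            | exact absurd hpq huv' | exact absurd hpq.symm huv'
      have hpres : ∀ z ∈ pset r₁ ∪ pset s₁, g (f z) = g z := by
        intro z hz
        rcases hmem z hz with h | h | h <;> subst h
        · rw [hfx]; exact hgx.symm
        · rw [hfu]; exact hgu.symm
        · rw [hfv]; exact hgv.symm
      obtain ⟨π, hπg, hπf⟩ := exists_perm_extend g _ f hinj hpres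
      refine ⟨π, hπg, ?_, ?_⟩
      · have heq : (pset r₁).image π = (pset r₁).image f :=
          Finset.image_congr (fun z hz => hπf z (Finset.mem_union_left _ hz))
        rw [heq, hru, Finset.image_insert, Finset.image_singleton, hfx, hfu, hru']
      · have heq : (pset s₁).image π = (pset s₁).image f :=
          Finset.image_congr (fun z hz => hπf z (Finset.mem_union_right _ hz))
        rw [heq, hsv, Finset.image_insert, Finset.image_singleton, hfx, hfv, hsv']
    · -- full overlap case
      have h2 : I₁.card = 2 := by omega
      have hIr : I₁ = pset r₁ :=
        Finset.eq_of_subset_of_card_le Finset.inter_subset_left (by rw [h2, pset_card])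
      have hIs : I₁ = pset s₁ :=
        Finset.eq_of_subset_of_card_le Finset.inter_subset_right (by rw [h2, pset_card])
      obtain rfl : r₁ = s₁ := pset_inj (hIr.symm.trans hIs)
      have h2' : I₂.card = 2 := hIcard ▸ h2
      have hIr' : I₂ = pset r₂ :=
        Finset.eq_of_subset_of_card_le Finset.inter_subset_left (by rw [h2', pset_card])
      have hIs' : I₂ = pset s₂ :=
        Finset.eq_of_subset_of_card_le Finset.inter_subset_right (by rw [h2', pset_card])
      obtain rfl : r₂ = s₂ := pset_inj (hIr'.symm.trans hIs')
      obtain ⟨hg1, hg2, hne12, hpr2⟩ := al_spec g hr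
      have hab : r₁.1.1 ≠ r₁.1.2 := pset_ne r₁
      set f : Fin d → Fin d :=
        fun z => if z = r₁.1.1 then al1 g r₁ r₂ else al2 g r₁ r₂ with hf
      have hfa : f r₁.1.1 = al1 g r₁ r₂ := by simp [hf]
      have hfb : f r₁.1.2 = al2 g r₁ r₂ := by simp [hf, hab.symm]
      have hmem : ∀ z ∈ pset r₁ ∪ pset r₁, z = r₁.1.1 ∨ z = r₁.1.2 := by
        intro z hz
        rcases Finset.mem_union.mp hz with h | h <;> simpa [pset] using h
      have hinj : Set.InjOn f ↑(pset r₁ ∪ pset r₁) := by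
        intro p hp q hq hpq
        rcases hmem p (Finset.mem_coe.mp hp) with h | h <;> subst h <;>
          rcases hmem q (Finset.mem_coe.mp hq) with h | h <;> subst h <;>
          simp only [hfa, hfb] at hpq <;>
          first
            | rfl
            | exact absurd hpq hne12 | exact absurd hpq.symm hne12
      have hpres : ∀ z ∈ pset r₁ ∪ pset r₁, g (f z) = g z := by
        intro z hz
        rcases hmem z hz with h | h <;> subst h
        · rw [hfa]; exact hg1
        · rw [hfb]; exact hg2
      obtain ⟨π, hπg, hπf⟩ := exists_perm_extend g _ f hinj hpres
      have him : (pset r₁).image π = pset r₂ := by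
        have heq : (pset r₁).image π = (pset r₁).image f :=
          Finset.image_congr (fun z hz => hπf z (Finset.mem_union_left _ hz))
        rw [heq]
        show ({r₁.1.1, r₁.1.2} : Finset (Fin d)).image f = pset r₂
        rw [Finset.image_insert, Finset.image_singleton, hfa, hfb, hpr2]
      exact ⟨π, hπg, him, him⟩

/-- If `r₁, r₂` lie in the same block, `s₁, s₂` lie in the same block, and
`φ̄(r₁,s₁) = φ̄(r₂,s₂)`, then for every block (represented by any of its elements `t₀`)
and all overlap types `κ₁, κ₂`, the sets
`{t ∈ ℬ_λ : φ̄(r₁,t) = κ₁ ∧ φ̄(s₁,t) = κ₂}` and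
`{t ∈ ℬ_λ : φ̄(r₂,t) = κ₁ ∧ φ̄(s₂,t) = κ₂}` have the same cardinality. -/
theorem statement_10 {d K : ℕ} (hd : 2 ≤ d) (hK : 1 ≤ K)
    (g : Fin d → Fin K) (hg : Function.Surjective g)
    (r₁ r₂ s₁ s₂ : PairIdx d)
    (hr : sameBlock g r₁ r₂) (hs : sameBlock g s₁ s₂)
    (hφ : overlap g r₁ s₁ = overlap g r₂ s₂)
    (t₀ : PairIdx d) (κ₁ κ₂ : Multiset (Fin K)) :
    (Finset.univ.filter
        (fun t => sameBlock g t₀ t ∧ overlap g r₁ t = κ₁ ∧ overlap g s₁ t = κ₂)).card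
      = (Finset.univ.filter
        (fun t => sameBlock g t₀ t ∧ overlap g r₂ t = κ₁ ∧ overlap g s₂ t = κ₂)).card := by
  classical
  obtain ⟨σ, hσg, hσr, hσs⟩ := exists_good_perm g r₁ r₂ s₁ s₂ hr hs hφ
  have hσg' : ∀ x, g (σ⁻¹ x) = g x := fun x => by
    conv_rhs => rw [← Equiv.apply_symm_apply σ x, hσg]
    rfl
  have hσr' : (pset r₂).image ⇑σ⁻¹ = pset r₁ := by
    rw [← hσr, Finset.image_image]
    have : (⇑σ⁻¹ ∘ ⇑σ) = id := by funext z; simp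
    rw [this, Finset.image_id]
  have hσs' : (pset s₂).image ⇑σ⁻¹ = pset s₁ := by
    rw [← hσs, Finset.image_image]
    have : (⇑σ⁻¹ ∘ ⇑σ) = id := by funext z; simp
    rw [this, Finset.image_id]
  refine Finset.card_bij' (fun t _ => pmap σ t) (fun t _ => pmap σ⁻¹ t) ?_ ?_ ?_ ?_
  · intro t ht
    rw [Finset.mem_filter] at ht ⊢
    obtain ⟨_, h1, h2, h3⟩ := ht
    refine ⟨Finset.mem_univ _, ?_, ?_, ?_⟩
    · exact (sameBlock_pmap g σ hσg t₀ t).mpr h1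
    · rw [overlap_pmap g σ hσg r₁ r₂ t hσr]; exact h2
    · rw [overlap_pmap g σ hσg s₁ s₂ t hσs]; exact h3
  · intro t ht
    rw [Finset.mem_filter] at ht ⊢
    obtain ⟨_, h1, h2, h3⟩ := ht
    refine ⟨Finset.mem_univ _, ?_, ?_, ?_⟩
    · exact (sameBlock_pmap g σ⁻¹ hσg' t₀ t).mpr h1
    · rw [overlap_pmap g σ⁻¹ hσg' r₂ r₁ t hσr']; exact h2
    · rw [overlap_pmap g σ⁻¹ hσg' s₂ s₁ t hσs']; exact h3
  · intro t _
    exact pmap_pmap_inv σ t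
  · intro t _
    have h := pmap_pmap_inv σ⁻¹ t
    rwa [inv_inv] at h
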